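/- arXiv:0805.4060 — 2 statements merged into one kernel-verified Lean document; each statement's English description precedes it below -/
import Mathlib

section
/- Let a > 0, let k be a natural number, let t = [−5a, 5a] × [−5a, 5a] and t_r = [5a, 15a] × [−5a, 5a] in ℝ², and let S ⊆ ℝ² be a finite set with |S ∩ t| + |S ∩ t_r| ≤ k. Then for all distinct points x ∈ S ∩ closedBall((4a,0), a) and y ∈ S ∩ closedBall((2a,0), a), the number of points z ∈ S \ {x} with d(x,z) < d(x,y) is strictly less than k; that is, y is a k-nearest neighbor of x. -/
open Metric

/-- The point `(x, y)` of the Euclidean plane. -/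
def pt (x y : ℝ) : EuclideanSpace ℝ (Fin 2) := WithLp.toLp 2 ![x, y]

/-- The rectangle `[x₀, x₁] × [y₀, y₁]` of the Euclidean plane. -/
def tile (x₀ x₁ y₀ y₁ : ℝ) : Set (EuclideanSpace ℝ (Fin 2)) :=
  {x | x 0 ∈ Set.Icc x₀ x₁ ∧ x 1 ∈ Set.Icc y₀ y₁}

lemma coord_abs_le_dist (p q : EuclideanSpace ℝ (Fin 2)) (i : Fin 2) :
    |p i - q i| ≤ dist p q := by
  have h := EuclideanSpace.dist_eq p q
  rw [h]
  have : |p i - q i| = Real.sqrt ((p i - q i) ^ 2) := by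
    rw [Real.sqrt_sq_eq_abs]
  rw [this]
  apply Real.sqrt_le_sqrt
  have : (p i - q i) ^ 2 = dist (p i) (q i) ^ 2 := by
    rw [Real.dist_eq, sq_abs]
  rw [this]
  exact Finset.single_le_sum (f := fun j => dist (p j) (q j) ^ 2)
    (fun j _ => sq_nonneg _) (Finset.mem_univ i)

lemma dist_pts (u v : ℝ) : dist (pt u 0) (pt v 0) = |u - v| := by
  rw [EuclideanSpace.dist_eq, Fin.sum_univ_two]
  simp [pt, Real.dist_eq, Real.sqrt_sq_eq_abs]

/-- Let `a > 0`, `k : ℕ`, `t = [-5a,5a] × [-5a,5a]`, `t_r = [5a,15a] × [-5a,5a]`, and let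
`S` be a finite set of points of the plane with `|S ∩ t| + |S ∩ t_r| ≤ k`. Then for all
distinct points `x ∈ S ∩ closedBall((4a,0), a)` and `y ∈ S ∩ closedBall((2a,0), a)`, the
number of points `z ∈ S \ {x}` with `dist x z < dist x y` is strictly less than `k`:
that is, `y` is a `k`-nearest neighbor of `x`. -/
theorem stmt_10 (a : ℝ) (ha : 0 < a) (k : ℕ) (S : Set (EuclideanSpace ℝ (Fin 2)))
    (hS : S.Finite)
    (hcard : (S ∩ tile (-(5*a)) (5*a) (-(5*a)) (5*a)).ncard +
      (S ∩ tile (5*a) (15*a) (-(5*a)) (5*a)).ncard ≤ k) :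
    ∀ x ∈ S ∩ closedBall (pt (4*a) 0) a, ∀ y ∈ S ∩ closedBall (pt (2*a) 0) a, x ≠ y →
      {z ∈ S \ {x} | dist x z < dist x y}.ncard < k := by
  intro x hx y hy hxy
  obtain ⟨hxS, hxB⟩ := hx
  obtain ⟨hyS, hyB⟩ := hy
  rw [mem_closedBall] at hxB hyB
  set c₁ : EuclideanSpace ℝ (Fin 2) := pt (4*a) 0 with hc₁
  set c₂ : EuclideanSpace ℝ (Fin 2) := pt (2*a) 0 with hc₂
  have hcc : dist c₁ c₂ = 2*a := by
    rw [hc₁, hc₂, dist_pts]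
    rw [show 4*a - 2*a = 2*a by ring, abs_of_pos (by linarith)]
  have hxy4 : dist x y ≤ 4*a := by
    calc dist x y ≤ dist x c₁ + dist c₁ c₂ + dist c₂ y := dist_triangle4 x c₁ c₂ y
    _ ≤ a + 2*a + a := by
        have := dist_comm c₂ y
        rw [this]; linarith
    _ = 4*a := by ring
  set T := S ∩ tile (-(5*a)) (5*a) (-(5*a)) (5*a) with hT
  set Tr := S ∩ tile (5*a) (15*a) (-(5*a)) (5*a) with hTr
  have hc₁0 : c₁ 0 = 4*a := rfl
  have hc₁1 : c₁ 1 = 0 := rfl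
  -- x ∈ T
  have hx0 : |x 0 - 4*a| ≤ a := by
    have := coord_abs_le_dist x c₁ 0
    rw [hc₁0] at this; linarith
  have hx1 : |x 1| ≤ a := by
    have := coord_abs_le_dist x c₁ 1
    rw [hc₁1, sub_zero] at this; linarith
  rw [abs_le] at hx0 hx1
  have hxT : x ∈ T := by
    exact ⟨hxS, ⟨by linarith [hx0.1], by linarith [hx0.2]⟩,
      ⟨by linarith [hx1.1], by linarith [hx1.2]⟩⟩
  -- the target set is contained in (T ∪ Tr) \ {x}
  have hsub : {z ∈ S \ {x} | dist x z < dist x y} ⊆ (T ∪ Tr) \ {x} := by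
    rintro z ⟨⟨hzS, hzx⟩, hzd⟩
    refine ⟨?_, hzx⟩
    have hz5 : dist z c₁ < 5*a := by
      calc dist z c₁ ≤ dist z x + dist x c₁ := dist_triangle z x c₁
      _ < 4*a + a := by
          have := dist_comm z x
          linarith [hzd, hxy4, hxB]
      _ = 5*a := by ring
    have hz0 : |z 0 - 4*a| < 5*a := lt_of_le_of_lt (by simpa [hc₁0] using coord_abs_le_dist z c₁ 0) hz5
    have hz1 : |z 1| < 5*a := lt_of_le_of_lt (by simpa [hc₁1] using coord_abs_le_dist z c₁ 1) hz5
    rw [abs_lt] at hz0 hz1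
    by_cases h : z 0 ≤ 5*a
    · left
      exact ⟨hzS, ⟨by linarith [hz0.1], h⟩, ⟨by linarith [hz1.1], by linarith [hz1.2]⟩⟩
    · right
      exact ⟨hzS, ⟨by linarith, by linarith [hz0.2]⟩, ⟨by linarith [hz1.1], by linarith [hz1.2]⟩⟩
  have hTfin : T.Finite := hS.inter_of_left _
  have hTrfin : Tr.Finite := hS.inter_of_left _
  have hUfin : (T ∪ Tr).Finite := hTfin.union hTrfin
  calc {z ∈ S \ {x} | dist x z < dist x y}.ncard
      ≤ ((T ∪ Tr) \ {x}).ncard := Set.ncard_le_ncard hsub hUfin.diff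
    _ < (T ∪ Tr).ncard := Set.ncard_diff_singleton_lt_of_mem (Or.inl hxT) hUfin
    _ ≤ T.ncard + Tr.ncard := Set.ncard_union_le _ _
    _ ≤ k := hcard
end

section
/- Let a > 0, let k be a natural number, let t = [−5a, 5a] × [−5a, 5a] and t_r = [5a, 15a] × [−5a, 5a] in ℝ², and let S ⊆ ℝ² be a finite set with 2·|S ∩ t| ≤ k and 2·|S ∩ t_r| ≤ k. Suppose S contains at least one point in each of the six closed balls of radius a centered at (0,0), (2a,0), (4a,0), (6a,0), (8a,0), and (10a,0). Then every s ∈ S ∩ closedBall((0,0), a) and s' ∈ S ∩ closedBall((10a,0), a) satisfy d(s,s') ≥ 8a, and the graph distance between s and s' in the k-nearest-neighbor graph NN(S,k) is at most (5/(8a)) · d(s,s'). -/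
open Metric

/-- `y` is a `k`-nearest neighbor of `x` in `S`: the number of points `z ∈ S \ {x}` with
`dist x z < dist x y` is strictly less than `k`. -/
def IsKNearest (S : Set (EuclideanSpace ℝ (Fin 2))) (k : ℕ)
    (x y : EuclideanSpace ℝ (Fin 2)) : Prop :=
  {z ∈ S \ {x} | dist x z < dist x y}.ncard < k

/-- The `k`-nearest-neighbor graph on a set `S` of points of the Euclidean plane: distinct
points `x, y ∈ S` are adjacent iff `y` is a `k`-nearest neighbor of `x` or `x` is a
`k`-nearest neighbor of `y`. -/
def NNGraph (S : Set (EuclideanSpace ℝ (Fin 2))) (k : ℕ) : SimpleGraph S where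
  Adj x y := x ≠ y ∧
    (IsKNearest S k (x : EuclideanSpace ℝ (Fin 2)) (y : EuclideanSpace ℝ (Fin 2)) ∨
     IsKNearest S k (y : EuclideanSpace ℝ (Fin 2)) (x : EuclideanSpace ℝ (Fin 2)))
  symm := by
    constructor
    intro x y ⟨hne, h⟩
    exact ⟨hne.symm, h.symm⟩
  loopless := by
    constructor
    intro x ⟨hne, _⟩
    exact hne rfl

lemma coord_le_dist (x y : EuclideanSpace ℝ (Fin 2)) (i : Fin 2) :
    dist (x i) (y i) ≤ dist x y := by
  rw [EuclideanSpace.dist_eq, show dist (x i) (y i) = Real.sqrt (dist (x i) (y i) ^ 2) from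
    (Real.sqrt_sq dist_nonneg).symm]
  exact Real.sqrt_le_sqrt (Finset.single_le_sum (f := fun j => dist (x j) (y j) ^ 2) (fun j _ => sq_nonneg _) (Finset.mem_univ i))

lemma pt_apply_zero (c d : ℝ) : pt c d 0 = c := by simp [pt]
lemma pt_apply_one (c d : ℝ) : pt c d 1 = d := by simp [pt]

lemma dist_pt (c c' : ℝ) : dist (pt c 0) (pt c' 0) = |c - c'| := by
  rw [EuclideanSpace.dist_eq, Fin.sum_univ_two, pt_apply_zero, pt_apply_one,
    pt_apply_zero, pt_apply_one]
  simp [Real.dist_eq, Real.sqrt_sq_eq_abs]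

lemma ball_coord {c a : ℝ} {s : EuclideanSpace ℝ (Fin 2)}
    (hs : s ∈ closedBall (pt c 0) a) : |s 0 - c| ≤ a ∧ |s 1| ≤ a := by
  rw [mem_closedBall] at hs
  constructor
  · have := coord_le_dist s (pt c 0) 0
    rw [pt_apply_zero, Real.dist_eq] at this
    linarith
  · have := coord_le_dist s (pt c 0) 1
    rw [pt_apply_one, Real.dist_eq, sub_zero] at this
    linarith

/-- Key counting lemma: any point of the left ball is a `k`-nearest neighbor of any
distinct point of the right ball (balls of radius `a` centered `≤ 2a` apart, both inside
the strip of the two tiles). -/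
lemma isKNearest_of_balls (a : ℝ) (ha : 0 < a) (k : ℕ)
    (S : Set (EuclideanSpace ℝ (Fin 2))) (hS : S.Finite)
    (hcard : 2 * (S ∩ tile (-(5*a)) (5*a) (-(5*a)) (5*a)).ncard ≤ k)
    (hcard' : 2 * (S ∩ tile (5*a) (15*a) (-(5*a)) (5*a)).ncard ≤ k)
    (c c' : ℝ) (hc0 : 0 ≤ c) (hc1 : c ≤ 10*a) (hc0' : 0 ≤ c') (hc1' : c' ≤ 10*a)
    (hcc : |c - c'| ≤ 2*a)
    {x y : EuclideanSpace ℝ (Fin 2)} (hx : x ∈ S) (hxc : x ∈ closedBall (pt c 0) a)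
    (hy : y ∈ S) (hyc : y ∈ closedBall (pt c' 0) a) (hxy : x ≠ y) :
    IsKNearest S k x y := by
  set T : Set (EuclideanSpace ℝ (Fin 2)) :=
    S ∩ {z | z 0 ∈ Set.Icc (-(5*a)) (15*a) ∧ z 1 ∈ Set.Icc (-(5*a)) (5*a)} with hT
  have hTfin : T.Finite := hS.subset Set.inter_subset_left
  -- T is contained in the union of the two tiles
  have hTk : T.ncard ≤ k := by
    have hsub : T ⊆ (S ∩ tile (-(5*a)) (5*a) (-(5*a)) (5*a)) ∪
        (S ∩ tile (5*a) (15*a) (-(5*a)) (5*a)) := by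
      rintro z ⟨hzS, ⟨hz0l, hz0r⟩, hz1⟩
      by_cases hz : z 0 ≤ 5*a
      · exact Or.inl ⟨hzS, ⟨hz0l, hz⟩, hz1⟩
      · exact Or.inr ⟨hzS, ⟨le_of_not_ge hz, hz0r⟩, hz1⟩
    have h1 := Set.ncard_le_ncard hsub ((hS.subset Set.inter_subset_left).union
      (hS.subset Set.inter_subset_left))
    have h2 := Set.ncard_union_le (S ∩ tile (-(5*a)) (5*a) (-(5*a)) (5*a))
      (S ∩ tile (5*a) (15*a) (-(5*a)) (5*a))
    omega
  have hxb := ball_coord hxc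
  have hyb := ball_coord hyc
  have habs := abs_le.mp hcc
  have hxb0 := abs_le.mp hxb.1
  have hxb1 := abs_le.mp hxb.2
  have hyb0 := abs_le.mp hyb.1
  have hyb1 := abs_le.mp hyb.2
  -- x, y ∈ T
  have hxT : x ∈ T := by
    refine ⟨hx, ⟨?_, ?_⟩, ?_, ?_⟩ <;> linarith
  have hyT : y ∈ T := by
    refine ⟨hy, ⟨?_, ?_⟩, ?_, ?_⟩ <;> linarith
  -- dist x y ≤ 4a
  have hdxy : dist x y ≤ 4 * a := by
    have h1 : dist x y ≤ dist x (pt c 0) + dist (pt c 0) (pt c' 0) + dist (pt c' 0) y :=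
      dist_triangle4 x (pt c 0) (pt c' 0) y
    have h2 : dist x (pt c 0) ≤ a := mem_closedBall.mp hxc
    have h3 : dist (pt c' 0) y ≤ a := by rw [dist_comm]; exact mem_closedBall.mp hyc
    rw [dist_pt] at h1
    linarith
  -- the near set is contained in T \ {x, y}
  have hAsub : {z ∈ S \ {x} | dist x z < dist x y} ⊆ T \ {x, y} := by
    rintro z ⟨⟨hzS, hzx⟩, hzd⟩
    have hzd4 : dist x z < 4 * a := lt_of_lt_of_le hzd hdxy
    have h0 := coord_le_dist x z 0
    have h1 := coord_le_dist x z 1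
    rw [Real.dist_eq] at h0 h1
    have h0' := abs_le.mp (le_of_lt (lt_of_le_of_lt h0 hzd4))
    have h1' := abs_le.mp (le_of_lt (lt_of_le_of_lt h1 hzd4))
    refine ⟨⟨hzS, ⟨?_, ?_⟩, ?_, ?_⟩, ?_⟩
    · linarith
    · linarith
    · linarith
    · linarith
    · rintro (rfl | rfl)
      · exact hzx rfl
      · exact absurd hzd (lt_irrefl _)
  have hpair : ({x, y} : Set (EuclideanSpace ℝ (Fin 2))) ⊆ T := by
    rintro z (rfl | rfl) <;> assumption
  have hdiff := Set.ncard_diff_add_ncard_of_subset hpair hTfin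
  rw [Set.ncard_pair hxy] at hdiff
  have hA : {z ∈ S \ {x} | dist x z < dist x y}.ncard ≤ (T \ {x, y}).ncard :=
    Set.ncard_le_ncard hAsub hTfin.diff
  unfold IsKNearest
  omega

lemma walk_step {V : Type*} {G : SimpleGraph V} {u v : V} (h : u = v ∨ G.Adj u v) :
    ∃ w : G.Walk u v, w.length ≤ 1 := by
  rcases h with rfl | h
  · exact ⟨.nil, by simp⟩
  · exact ⟨.cons h .nil, by simp⟩

/-- Let `a > 0`, `k : ℕ`, `t = [-5a,5a] × [-5a,5a]`, `t_r = [5a,15a] × [-5a,5a]`, and let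
`S` be a finite set with `2|S ∩ t| ≤ k` and `2|S ∩ t_r| ≤ k` which meets each of the six
closed balls of radius `a` centered at `(0,0)`, `(2a,0)`, `(4a,0)`, `(6a,0)`, `(8a,0)` and
`(10a,0)`. Then every `s ∈ S ∩ closedBall((0,0),a)` and `s' ∈ S ∩ closedBall((10a,0),a)`
satisfy `dist s s' ≥ 8a`, and the graph distance between them in the
`k`-nearest-neighbor graph `NNGraph S k` is at most `(5/(8a)) * dist s s'`. -/
theorem stmt_12 (a : ℝ) (ha : 0 < a) (k : ℕ) (S : Set (EuclideanSpace ℝ (Fin 2)))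
    (hS : S.Finite)
    (hcard : 2 * (S ∩ tile (-(5*a)) (5*a) (-(5*a)) (5*a)).ncard ≤ k)
    (hcard' : 2 * (S ∩ tile (5*a) (15*a) (-(5*a)) (5*a)).ncard ≤ k)
    (h0 : (S ∩ closedBall (pt 0 0) a).Nonempty)
    (h2 : (S ∩ closedBall (pt (2*a) 0) a).Nonempty)
    (h4 : (S ∩ closedBall (pt (4*a) 0) a).Nonempty)
    (h6 : (S ∩ closedBall (pt (6*a) 0) a).Nonempty)
    (h8 : (S ∩ closedBall (pt (8*a) 0) a).Nonempty)
    (h10 : (S ∩ closedBall (pt (10*a) 0) a).Nonempty) :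
    ∀ s, ∀ hs : s ∈ S, s ∈ closedBall (pt 0 0) a →
    ∀ s', ∀ hs' : s' ∈ S, s' ∈ closedBall (pt (10*a) 0) a →
      8 * a ≤ dist s s' ∧
      ((NNGraph S k).dist ⟨s, hs⟩ ⟨s', hs'⟩ : ℝ) ≤ (5 / (8 * a)) * dist s s' := by
  intro s hs hsb s' hs' hsb'
  -- lower bound on distance via first coordinates
  have hsc := ball_coord hsb
  have hsc' := ball_coord hsb'
  have hs0 := abs_le.mp (by simpa using hsc.1)
  have hs0' := abs_le.mp hsc'.1
  have hdist : 8 * a ≤ dist s s' := by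
    have h := coord_le_dist s s' 0
    rw [Real.dist_eq] at h
    have : 8 * a ≤ |s 0 - s' 0| := by
      rw [abs_sub_comm, le_abs]
      left; linarith
    linarith
  refine ⟨hdist, ?_⟩
  -- pick intermediate points
  obtain ⟨p2, hp2S, hp2b⟩ := h2
  obtain ⟨p4, hp4S, hp4b⟩ := h4
  obtain ⟨p6, hp6S, hp6b⟩ := h6
  obtain ⟨p8, hp8S, hp8b⟩ := h8
  -- one step
  have step : ∀ (c c' : ℝ), 0 ≤ c → c ≤ 10*a → 0 ≤ c' → c' ≤ 10*a → |c - c'| ≤ 2*a →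
      ∀ (x y : EuclideanSpace ℝ (Fin 2)) (hx : x ∈ S), x ∈ closedBall (pt c 0) a →
      ∀ (hy : y ∈ S), y ∈ closedBall (pt c' 0) a →
      (⟨x, hx⟩ : S) = ⟨y, hy⟩ ∨ (NNGraph S k).Adj ⟨x, hx⟩ ⟨y, hy⟩ := by
    intro c c' hc0 hc1 hc0' hc1' hcc x y hx hxc hy hyc
    by_cases hxy : x = y
    · exact Or.inl (Subtype.ext hxy)
    · refine Or.inr ⟨fun h => hxy (congrArg Subtype.val h), Or.inl ?_⟩
      exact isKNearest_of_balls a ha k S hS hcard hcard' c c' hc0 hc1 hc0' hc1' hcc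
        hx hxc hy hyc hxy
  have e1 := step 0 (2*a) le_rfl (by linarith) (by linarith) (by linarith)
    (by rw [abs_le]; constructor <;> linarith) s p2 hs (by simpa using hsb) hp2S hp2b
  have e2 := step (2*a) (4*a) (by linarith) (by linarith) (by linarith) (by linarith)
    (by rw [abs_le]; constructor <;> linarith) p2 p4 hp2S hp2b hp4S hp4b
  have e3 := step (4*a) (6*a) (by linarith) (by linarith) (by linarith) (by linarith)
    (by rw [abs_le]; constructor <;> linarith) p4 p6 hp4S hp4b hp6S hp6b
  have e4 := step (6*a) (8*a) (by linarith) (by linarith) (by linarith) (by linarith)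
    (by rw [abs_le]; constructor <;> linarith) p6 p8 hp6S hp6b hp8S hp8b
  have e5 := step (8*a) (10*a) (by linarith) (by linarith) (by linarith) (by linarith)
    (by rw [abs_le]; constructor <;> linarith) p8 s' hp8S hp8b hs' hsb'
  obtain ⟨w1, hw1⟩ := walk_step e1
  obtain ⟨w2, hw2⟩ := walk_step e2
  obtain ⟨w3, hw3⟩ := walk_step e3
  obtain ⟨w4, hw4⟩ := walk_step e4
  obtain ⟨w5, hw5⟩ := walk_step e5
  have hgd : (NNGraph S k).dist ⟨s, hs⟩ ⟨s', hs'⟩ ≤ 5 := by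
    have hw := SimpleGraph.dist_le (w1.append (w2.append (w3.append (w4.append w5))))
    simp only [SimpleGraph.Walk.length_append] at hw
    omega
  have h5 : (5 : ℝ) ≤ 5 / (8 * a) * dist s s' := by
    have h8a : (0:ℝ) < 8 * a := by linarith
    rw [div_mul_eq_mul_div, le_div_iff₀ h8a]
    nlinarith
  calc ((NNGraph S k).dist ⟨s, hs⟩ ⟨s', hs'⟩ : ℝ) ≤ 5 := by exact_mod_cast hgd
    _ ≤ 5 / (8 * a) * dist s s' := h5
end
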